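/- Let q > 0 and a be integers, and let X(q,a) be the space of continuous functions F: ℝ² → ℂ with F(s+1,t) = F(s,t) and F(s,t-q) = e^{2πias} F(s,t). Then for q₁, q₂ > 0 and any a₁, a₂ ∈ ℤ, the direct sum X(q₁,a₁) ⊕ X(q₂,a₂) is isomorphic as a C(𝕋²)-module to X(q₁+q₂, a₁+a₂). -/

import Mathlib

noncomputable section

/-- The projective `C(𝕋²)`-module `X(q,a)`: continuous functions on ℝ² which are
periodic modulo 1 in the first variable and satisfy `F(s,t-q) = e(as) F(s,t)`. -/
def Xset (q a : ℤ) : Set (ℝ × ℝ → ℂ) :=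
  {F | Continuous F ∧ (∀ s t : ℝ, F (s + 1, t) = F (s, t)) ∧
    ∀ s t : ℝ, F (s, t - (q : ℝ)) =
      Complex.exp (2 * Real.pi * Complex.I * (a : ℂ) * (s : ℂ)) * F (s, t)}

/-- Continuous ℤ²-periodic functions on ℝ², i.e. the algebra `C(𝕋²)`. -/
def PerC (f : ℝ × ℝ → ℂ) : Prop :=
  Continuous f ∧ (∀ s t : ℝ, f (s + 1, t) = f (s, t)) ∧ ∀ s t : ℝ, f (s, t + 1) = f (s, t)

open Complex Set

/-- `e(a s) = exp(2πi a s)`. -/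
def ep (a : ℤ) (s : ℝ) : ℂ := Complex.exp (2 * Real.pi * Complex.I * (a : ℂ) * (s : ℂ))

lemma ep_ne_zero (a : ℤ) (s : ℝ) : ep a s ≠ 0 := Complex.exp_ne_zero _

lemma ep_add (a b : ℤ) (s : ℝ) : ep (a + b) s = ep a s * ep b s := by
  unfold ep; rw [← Complex.exp_add]; congr 1; push_cast; ring

lemma ep_zero (s : ℝ) : ep 0 s = 1 := by simp [ep]

lemma ep_mul_neg (a : ℤ) (s : ℝ) : ep a s * ep (-a) s = 1 := by
  rw [← ep_add]; simp [ep_zero]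

lemma ep_neg_mul (a : ℤ) (s : ℝ) : ep (-a) s * ep a s = 1 := by
  rw [← ep_add]; simp [ep_zero]

lemma ep_s_add_one (a : ℤ) (s : ℝ) : ep a (s + 1) = ep a s := by
  unfold ep
  rw [show (2 * (Real.pi:ℂ) * Complex.I * (a : ℂ) * ((s + 1 : ℝ) : ℂ))
      = 2 * Real.pi * Complex.I * (a : ℂ) * (s:ℂ) + (a:ℂ) * (2 * Real.pi * Complex.I) by
    push_cast; ring, Complex.exp_add, Complex.exp_int_mul_two_pi_mul_I, mul_one]

lemma ep_continuous (a : ℤ) : Continuous fun s : ℝ => ep a s := by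
  unfold ep; fun_prop

def cc (r : ℝ) : ℂ := ((Real.cos (Real.pi * r / 2) : ℝ) : ℂ)
def ss (r : ℝ) : ℂ := ((Real.sin (Real.pi * r / 2) : ℝ) : ℂ)
def ei (r : ℝ) : ℂ := Complex.exp (Real.pi * Complex.I * r)

lemma ss_sq_add_cc_sq (r : ℝ) : ss r ^ 2 + cc r ^ 2 = 1 := by
  unfold ss cc; norm_cast; exact Real.sin_sq_add_cos_sq _

lemma cc_zero : cc 0 = 1 := by simp [cc]
lemma ss_zero : ss 0 = 0 := by simp [ss]
lemma ei_zero : ei 0 = 1 := by simp [ei]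
lemma cc_one : cc 1 = 0 := by simp [cc, Real.cos_pi_div_two]
lemma ss_one : ss 1 = 1 := by simp [ss, Real.sin_pi_div_two]
lemma ei_one : ei 1 = -1 := by simp [ei, Complex.exp_pi_mul_I]
lemma ei_neg_one : ei (-1) = -1 := by
  unfold ei
  push_cast
  rw [show (Real.pi:ℂ) * Complex.I * (-1) = -(Real.pi * Complex.I) by ring,
    Complex.exp_neg, Complex.exp_pi_mul_I]
  norm_num

lemma ei_mul_neg (r : ℝ) : ei r * ei (-r) = 1 := by
  unfold ei; rw [← Complex.exp_add]; push_cast; ring_nf; exact Complex.exp_zero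
lemma ei_neg_mul (r : ℝ) : ei (-r) * ei r = 1 := by rw [mul_comm]; exact ei_mul_neg r

def cl (c τ : ℝ) : ℝ := max 0 (min 1 (τ - c))

lemma cl_of_le {c τ : ℝ} (h : τ ≤ c) : cl c τ = 0 := by
  unfold cl
  rw [min_eq_right (by linarith), max_eq_left (by linarith)]

lemma cl_of_ge {c τ : ℝ} (h : c + 1 ≤ τ) : cl c τ = 1 := by
  unfold cl
  rw [min_eq_left (by linarith)]; norm_num

lemma cl_of_mem {c τ : ℝ} (h1 : c ≤ τ) (h2 : τ ≤ c + 1) : cl c τ = τ - c := by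
  unfold cl
  rw [min_eq_right (by linarith), max_eq_right (by linarith)]

lemma cl_continuous (c : ℝ) : Continuous fun τ : ℝ => cl c τ := by
  unfold cl; fun_prop

/-- Extend a function on the strip `[0,q]` to all of `ℝ²` by twisted periodicity. -/
def glue (q : ℝ) (b : ℤ) (Φ : ℝ × ℝ → ℂ) : ℝ × ℝ → ℂ :=
  fun x => ep (-(b * ⌊x.2 / q⌋)) x.1 * Φ (x.1, x.2 - ⌊x.2 / q⌋ * q)

lemma glue_eq {q : ℝ} (hq : 0 < q) (b : ℤ) (Φ : ℝ × ℝ → ℂ) {s t : ℝ}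
    (h0 : 0 ≤ t) (h1 : t < q) : glue q b Φ (s, t) = Φ (s, t) := by
  have hf : ⌊t / q⌋ = 0 :=
    Int.floor_eq_zero_iff.mpr ⟨div_nonneg h0 hq.le, (div_lt_one hq).mpr h1⟩
  simp [glue, hf, ep_zero]

lemma glue_eq_neg_one {q : ℝ} (hq : 0 < q) (b : ℤ) (Φ : ℝ × ℝ → ℂ) {s t : ℝ}
    (h0 : -q ≤ t) (h1 : t < 0) : glue q b Φ (s, t) = ep b s * Φ (s, t + q) := by
  have hf : ⌊t / q⌋ = -1 := by
    rw [Int.floor_eq_iff]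
    constructor
    · push_cast
      rw [le_div_iff₀ hq]; linarith
    · push_cast
      have := div_neg_of_neg_of_pos h1 hq
      linarith
  simp only [glue, hf]
  rw [show (-(b * (-1:ℤ))) = b by ring]
  congr 2
  push_cast; ring

lemma glue_sub {q : ℝ} (hq : 0 < q) (b : ℤ) (Φ : ℝ × ℝ → ℂ) (s t : ℝ) :
    glue q b Φ (s, t - q) = ep b s * glue q b Φ (s, t) := by
  have hdiv : (t - q) / q = t / q - 1 := by
    field_simp
  have hf : ⌊(t - q) / q⌋ = ⌊t / q⌋ - 1 := by
    rw [hdiv, show (1:ℝ) = ((1:ℤ):ℝ) by norm_num, Int.floor_sub_intCast]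
  simp only [glue, hf]
  rw [show (-(b * (⌊t / q⌋ - 1))) = b + -(b * ⌊t / q⌋) by ring, ep_add]
  rw [mul_assoc]
  congr 3
  push_cast; ring

lemma glue_s (q : ℝ) (b : ℤ) (Φ : ℝ × ℝ → ℂ)
    (hΦ : ∀ s t, Φ (s + 1, t) = Φ (s, t)) (s t : ℝ) :
    glue q b Φ (s + 1, t) = glue q b Φ (s, t) := by
  simp only [glue, ep_s_add_one, hΦ]

lemma glue_continuous {q : ℝ} (hq : 0 < q) (b : ℤ) (Φ : ℝ × ℝ → ℂ)
    (hΦ : Continuous Φ) (hseam : ∀ s, Φ (s, q) = ep (-b) s * Φ (s, 0)) :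
    Continuous (glue q b Φ) := by
  set S : ℤ → Set (ℝ × ℝ) := fun n => {x | x.2 ∈ Icc ((n : ℝ) * q) ((n : ℝ) * q + q)} with hS
  have hclosed : ∀ n, IsClosed (S n) := fun n => isClosed_Icc.preimage continuous_snd
  have hcov : ⋃ n, S n = univ := by
    refine eq_univ_of_forall fun x => mem_iUnion.mpr ⟨⌊x.2 / q⌋, ?_⟩
    constructor
    · calc ((⌊x.2 / q⌋ : ℝ)) * q ≤ (x.2 / q) * q := by
            exact mul_le_mul_of_nonneg_right (Int.floor_le _) hq.le
        _ = x.2 := by field_simp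
    · have h2 := Int.sub_floor_div_mul_lt x.2 hq
      have h3 : (⌊x.2 / q⌋ : ℝ) * q + q > x.2 := by linarith
      exact le_of_lt h3
  have hlf : LocallyFinite S := by
    intro x
    refine ⟨{y | |y.2 - x.2| < q}, ?_, ?_⟩
    · have : IsOpen {y : ℝ × ℝ | |y.2 - x.2| < q} := by
        have : Continuous fun y : ℝ × ℝ => |y.2 - x.2| := by fun_prop
        exact isOpen_lt this continuous_const
      exact this.mem_nhds (by simp [hq])
    · apply Set.Finite.subset (Set.finite_Icc ⌈(x.2 - 2*q)/q⌉ ⌊(x.2 + q)/q⌋)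
      rintro n ⟨y, ⟨hy1, hy2⟩, hy3⟩
      simp only [mem_setOf_eq, abs_lt] at hy3
      constructor
      · rw [Int.ceil_le, div_le_iff₀ hq]
        push_cast
        nlinarith [hy3.1, hy3.2]
      · rw [Int.le_floor, le_div_iff₀ hq]
        push_cast
        nlinarith [hy3.1, hy3.2]
  apply hlf.continuous hcov hclosed
  intro n
  have hcont : Continuous fun x : ℝ × ℝ => ep (-(b * n)) x.1 * Φ (x.1, x.2 - n * q) := by
    apply Continuous.mul
    · exact (ep_continuous _).comp continuous_fst
    · exact hΦ.comp (by fun_prop)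
  apply ContinuousOn.congr (hcont.continuousOn)
  rintro ⟨s, t⟩ ⟨h1, h2⟩
  simp only at h1 h2
  rcases lt_or_eq_of_le h2 with h2 | h2
  · have hf : ⌊t / q⌋ = n := by
      rw [Int.floor_eq_iff]
      constructor
      · rw [le_div_iff₀ hq]; linarith
      · rw [div_lt_iff₀ hq]; push_cast; linarith
    simp [glue, hf]
  · have hf : ⌊t / q⌋ = n + 1 := by
      have : t = (n + 1 : ℝ) * q := by linarith
      rw [this, mul_div_assoc, div_self hq.ne', mul_one,
        show ((n:ℝ) + 1) = ((n + 1 : ℤ) : ℝ) by push_cast; ring, Int.floor_intCast]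
    simp only [glue, hf]
    have harg : t - ((n : ℝ) + 1) * q = 0 := by linarith
    push_cast
    rw [harg, show t - (n:ℝ) * q = q by linarith, hseam,
      show (-(b * (n + 1))) = -b + -(b*n) by ring, ep_add]
    ring

lemma shift_int {q : ℝ} (hq : 0 < q) {a : ℤ} {F : ℝ × ℝ → ℂ}
    (h3 : ∀ s t : ℝ, F (s, t - q) = ep a s * F (s, t)) :
    ∀ (n : ℤ) (s t : ℝ), F (s, t - n * q) = ep (n * a) s * F (s, t) := by
  have h3' : ∀ s t : ℝ, F (s, t + q) = ep (-a) s * F (s, t) := by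
    intro s t
    have h := h3 s (t + q)
    rw [show t + q - q = t by ring] at h
    rw [h, ← mul_assoc, ep_neg_mul, one_mul]
  intro n
  induction n using Int.induction_on with
  | zero => intro s t; simp [ep_zero]
  | succ n ih =>
      intro s t
      push_cast
      rw [show t - ((n:ℝ) + 1) * q = (t - (n:ℝ) * q) - q by ring,
        h3 s (t - (n:ℝ) * q)]
      have ih' := ih s t
      push_cast at ih'
      rw [ih', ← mul_assoc, ← ep_add]
      congr 2
      ring
  | pred n ih =>
      intro s t
      push_cast
      rw [show t - (-(n:ℝ) - 1) * q = (t - (-((n:ℝ))) * q) + q by ring,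
        h3' s (t - (-((n:ℝ))) * q)]
      have ih' := ih s t
      push_cast at ih'
      rw [show t - -(n:ℝ) * q = t - (-((n:ℝ))) * q by ring] at ih'
      rw [ih', ← mul_assoc, ← ep_add]
      congr 2
      ring

lemma eq_on_strip {q : ℝ} (hq : 0 < q) {a : ℤ} {F₁ F₂ : ℝ × ℝ → ℂ}
    (h1 : ∀ s t : ℝ, F₁ (s, t - q) = ep a s * F₁ (s, t))
    (h2 : ∀ s t : ℝ, F₂ (s, t - q) = ep a s * F₂ (s, t))
    (h : ∀ s t : ℝ, 0 ≤ t → t < q → F₁ (s, t) = F₂ (s, t)) : F₁ = F₂ := by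
  funext x
  obtain ⟨s, t⟩ := x
  have e1 := shift_int hq h1 ⌊t / q⌋ s t
  have e2 := shift_int hq h2 ⌊t / q⌋ s t
  have key := h s (t - ⌊t / q⌋ * q) (Int.sub_floor_div_mul_nonneg t hq)
    (Int.sub_floor_div_mul_lt t hq)
  rw [e1, e2] at key
  exact mul_left_cancel₀ (ep_ne_zero _ _) key

/-- The main combination map on the strip `0 ≤ t ≤ q₁+q₂`. -/
def PhiL (q₁ q₂ a₂ : ℤ) (F G : ℝ × ℝ → ℂ) : ℝ × ℝ → ℂ := fun x =>
  ei (cl ((q₁:ℝ) - 1) x.2) * cc (cl ((q₁:ℝ) - 1) x.2) * F x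
  + ss (cl ((q₁:ℝ) - 1) x.2) * cc (cl ((q₁:ℝ) + (q₂:ℝ) - 1) x.2) * G (x.1, x.2 - (q₁:ℝ))
  - ei (cl ((q₁:ℝ) + (q₂:ℝ) - 1) x.2) * ss (cl ((q₁:ℝ) + (q₂:ℝ) - 1) x.2) * ep (-a₂) x.1
      * F (x.1, x.2 - (q₂:ℝ))

def LL (q₁ q₂ a₁ a₂ : ℤ) (F G : ℝ × ℝ → ℂ) : ℝ × ℝ → ℂ :=
  glue (((q₁ + q₂ : ℤ) : ℝ)) (a₁ + a₂) (PhiL q₁ q₂ a₂ F G)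

def PhiF (q₁ q₂ a₂ : ℤ) (H : ℝ × ℝ → ℂ) : ℝ × ℝ → ℂ := fun x =>
  ei (-(cl ((q₁:ℝ) - 1) x.2)) * (cc (cl ((q₁:ℝ) - 1) x.2) * H x
    - ss (cl ((q₁:ℝ) - 1) x.2) * ep a₂ x.1 * H (x.1, x.2 + (q₂:ℝ)))

def PF (q₁ q₂ a₁ a₂ : ℤ) (H : ℝ × ℝ → ℂ) : ℝ × ℝ → ℂ :=
  glue ((q₁ : ℝ)) a₁ (PhiF q₁ q₂ a₂ H)

def PhiG (q₁ q₂ a₂ : ℤ) (H : ℝ × ℝ → ℂ) : ℝ × ℝ → ℂ := fun x =>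
  ss (cl ((q₂:ℝ) - 1) x.2) * ep (-a₂) x.1 * H (x.1, x.2 + (q₁:ℝ) - (q₂:ℝ))
  + cc (cl ((q₂:ℝ) - 1) x.2) * H (x.1, x.2 + (q₁:ℝ))

def PG (q₁ q₂ a₁ a₂ : ℤ) (H : ℝ × ℝ → ℂ) : ℝ × ℝ → ℂ :=
  glue ((q₂ : ℝ)) a₂ (PhiG q₁ q₂ a₂ H)

lemma mem_Xset_glue (q a : ℤ) (hq : 0 < q) (Φ : ℝ × ℝ → ℂ) (hc : Continuous Φ)
    (hs : ∀ s t : ℝ, Φ (s + 1, t) = Φ (s, t))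
    (hseam : ∀ s : ℝ, Φ (s, ((q : ℤ) : ℝ)) = ep (-a) s * Φ (s, 0)) :
    glue ((q : ℤ) : ℝ) a Φ ∈ Xset q a := by
  have hqr : (0:ℝ) < ((q:ℤ):ℝ) := by exact_mod_cast hq
  refine ⟨glue_continuous hqr a Φ hc hseam, fun s t => glue_s _ _ _ hs s t,
    fun s t => glue_sub hqr a Φ s t⟩

lemma LL_mem (q₁ q₂ a₁ a₂ : ℤ) (hq₁ : 0 < q₁) (hq₂ : 0 < q₂) {F G : ℝ × ℝ → ℂ}
    (hF : F ∈ Xset q₁ a₁) (hG : G ∈ Xset q₂ a₂) :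
    LL q₁ q₂ a₁ a₂ F G ∈ Xset (q₁ + q₂) (a₁ + a₂) := by
  obtain ⟨hFc, hF1, hF3⟩ := hF
  obtain ⟨hGc, hG1, hG3⟩ := hG
  have hr1 : (1:ℝ) ≤ (q₁:ℝ) := by exact_mod_cast hq₁
  have hr2 : (1:ℝ) ≤ (q₂:ℝ) := by exact_mod_cast hq₂
  apply mem_Xset_glue _ _ (by positivity)
  · unfold PhiL cc ss ei cl ep
    fun_prop
  · intro s t
    simp only [PhiL]
    simp only [hF1, hG1, ep_s_add_one]
  · intro s
    simp only [PhiL]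
    push_cast
    rw [cl_of_ge (by linarith : (q₁:ℝ) - 1 + 1 ≤ (q₁:ℝ) + (q₂:ℝ)),
        cl_of_ge (by linarith : (q₁:ℝ) + (q₂:ℝ) - 1 + 1 ≤ (q₁:ℝ) + (q₂:ℝ)),
        cl_of_le (by linarith : (0:ℝ) ≤ (q₁:ℝ) - 1),
        cl_of_le (by linarith : (0:ℝ) ≤ (q₁:ℝ) + (q₂:ℝ) - 1)]
    simp [cc_one, ss_one, ei_one, cc_zero, ss_zero, ei_zero]
    have hF0 : F (s, (0:ℝ)) = ep a₁ s * F (s, (q₁:ℝ)) := by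
      have h := hF3 s (q₁:ℝ)
      rw [sub_self] at h
      exact h
    rw [hF0, ep_add]
    linear_combination (-(ep (-a₂) s * F (s, (q₁:ℝ)))) * (ep_neg_mul a₁ s)

lemma PF_mem (q₁ q₂ a₁ a₂ : ℤ) (hq₁ : 0 < q₁) (hq₂ : 0 < q₂) {H : ℝ × ℝ → ℂ}
    (hH : H ∈ Xset (q₁ + q₂) (a₁ + a₂)) : PF q₁ q₂ a₁ a₂ H ∈ Xset q₁ a₁ := by
  obtain ⟨hHc, hH1, hH3⟩ := hH
  have hr1 : (1:ℝ) ≤ (q₁:ℝ) := by exact_mod_cast hq₁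
  have hr2 : (1:ℝ) ≤ (q₂:ℝ) := by exact_mod_cast hq₂
  apply mem_Xset_glue _ _ hq₁
  · unfold PhiF cc ss ei cl ep
    fun_prop
  · intro s t
    simp only [PhiF, hH1, ep_s_add_one]
  · intro s
    simp only [PhiF]
    rw [cl_of_ge (by linarith : (q₁:ℝ) - 1 + 1 ≤ ((q₁:ℤ):ℝ)),
        cl_of_le (by linarith : (0:ℝ) ≤ (q₁:ℝ) - 1)]
    simp [cc_one, ss_one, ei_neg_one, cc_zero, ss_zero, ei_zero]
    have hH0 : H (s, (0:ℝ)) = ep (a₁ + a₂) s * H (s, (((q₁ + q₂ : ℤ)):ℝ)) := by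
      have h := hH3 s (((q₁ + q₂ : ℤ)):ℝ)
      rw [sub_self] at h
      exact h
    rw [show (((q₁ + q₂ : ℤ)):ℝ) = ((q₁:ℤ):ℝ) + ((q₂:ℤ):ℝ) by push_cast; ring] at hH0
    rw [hH0]
    have he : ep (-a₁) s * ep (a₁ + a₂) s = ep a₂ s := by
      rw [← ep_add]; congr 1; ring
    linear_combination (-(H (s, ((q₁:ℤ):ℝ) + ((q₂:ℤ):ℝ)))) * he

lemma PG_mem (q₁ q₂ a₁ a₂ : ℤ) (hq₁ : 0 < q₁) (hq₂ : 0 < q₂) {H : ℝ × ℝ → ℂ}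
    (hH : H ∈ Xset (q₁ + q₂) (a₁ + a₂)) : PG q₁ q₂ a₁ a₂ H ∈ Xset q₂ a₂ := by
  obtain ⟨hHc, hH1, hH3⟩ := hH
  have hr2 : (1:ℝ) ≤ (q₂:ℝ) := by exact_mod_cast hq₂
  apply mem_Xset_glue _ _ hq₂
  · unfold PhiG cc ss cl ep
    fun_prop
  · intro s t
    simp only [PhiG, hH1, ep_s_add_one]
  · intro s
    simp only [PhiG]
    rw [cl_of_ge (by linarith : (q₂:ℝ) - 1 + 1 ≤ ((q₂:ℤ):ℝ)),
        cl_of_le (by linarith : (0:ℝ) ≤ (q₂:ℝ) - 1)]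
    simp [cc_one, ss_one, cc_zero, ss_zero]

lemma LL_add (q₁ q₂ a₁ a₂ : ℤ) (F F' G G' : ℝ × ℝ → ℂ) :
    LL q₁ q₂ a₁ a₂ (F + F') (G + G') = LL q₁ q₂ a₁ a₂ F G + LL q₁ q₂ a₁ a₂ F' G' := by
  funext x
  simp only [LL, glue, PhiL, Pi.add_apply]
  ring

lemma perC_shift {f : ℝ × ℝ → ℂ} (hf : PerC f) :
    ∀ (m : ℤ) (s t : ℝ), f (s, t + (m : ℝ)) = f (s, t) := by
  obtain ⟨-, -, h⟩ := hf
  intro m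
  induction m using Int.induction_on with
  | zero => intro s t; norm_num
  | succ n ih =>
      intro s t
      push_cast
      rw [show t + ((n:ℝ) + 1) = (t + (n:ℝ)) + 1 by ring, h]
      have ih' := ih s t
      push_cast at ih'
      exact ih'
  | pred n ih =>
      intro s t
      push_cast
      have h2 := h s (t + (-(n:ℝ) - 1))
      rw [show t + (-(n:ℝ) - 1) + 1 = t + -(n:ℝ) by ring] at h2
      have ih' := ih s t
      push_cast at ih'
      rw [h2] at ih'
      exact ih'

lemma LL_smul (q₁ q₂ a₁ a₂ : ℤ) {f : ℝ × ℝ → ℂ} (F G : ℝ × ℝ → ℂ) (hf : PerC f) :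
    LL q₁ q₂ a₁ a₂ (fun x => f x * F x) (fun x => f x * G x)
      = fun x => f x * LL q₁ q₂ a₁ a₂ F G x := by
  funext x
  obtain ⟨s, t⟩ := x
  simp only [LL, glue, PhiL]
  set n := ⌊t / ((q₁ + q₂ : ℤ) : ℝ)⌋ with hn
  have e1 : t - (n:ℝ) * ((q₁ + q₂ : ℤ) : ℝ) = t + (((-(n * (q₁ + q₂)) : ℤ)):ℝ) := by
    push_cast; ring
  rw [e1]
  have e2 : t + (((-(n * (q₁ + q₂)) : ℤ)):ℝ) - ((q₁:ℤ):ℝ)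
      = t + (((-(n * (q₁ + q₂)) - q₁ : ℤ)):ℝ) := by push_cast; ring
  have e3 : t + (((-(n * (q₁ + q₂)) : ℤ)):ℝ) - ((q₂:ℤ):ℝ)
      = t + (((-(n * (q₁ + q₂)) - q₂ : ℤ)):ℝ) := by push_cast; ring
  rw [e2, e3, perC_shift hf (-(n * (q₁ + q₂))) s t,
    perC_shift hf (-(n * (q₁ + q₂)) - q₁) s t, perC_shift hf (-(n * (q₁ + q₂)) - q₂) s t]
  ring

lemma PF_LL (q₁ q₂ a₁ a₂ : ℤ) (hq₁ : 0 < q₁) (hq₂ : 0 < q₂) {F G : ℝ × ℝ → ℂ}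
    (hF : F ∈ Xset q₁ a₁) (hG : G ∈ Xset q₂ a₂) :
    PF q₁ q₂ a₁ a₂ (LL q₁ q₂ a₁ a₂ F G) = F := by
  obtain ⟨hFc, hF1, hF3⟩ := hF
  obtain ⟨hGc, hG1, hG3⟩ := hG
  have hr1 : (1:ℝ) ≤ (q₁:ℝ) := by exact_mod_cast hq₁
  have hr2 : (1:ℝ) ≤ (q₂:ℝ) := by exact_mod_cast hq₂
  have hq1r : (0:ℝ) < ((q₁:ℤ):ℝ) := by linarith
  have hQr : (0:ℝ) < (((q₁ + q₂ : ℤ)):ℝ) := by push_cast; linarith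
  apply eq_on_strip hq1r (a := a₁)
  · intro s t; exact glue_sub hq1r _ _ s t
  · exact hF3
  · intro s t h0 h1
    have hQeq : (((q₁ + q₂ : ℤ)):ℝ) = (q₁:ℝ) + (q₂:ℝ) := by push_cast; ring
    show glue _ a₁ (PhiF q₁ q₂ a₂ (LL q₁ q₂ a₁ a₂ F G)) (s, t) = F (s, t)
    rw [glue_eq hq1r _ _ h0 h1]
    simp only [PhiF]
    rcases le_or_gt t ((q₁:ℝ) - 1) with hA | hA
    · rw [cl_of_le hA]
      simp only [neg_zero, ei_zero, cc_zero, ss_zero, one_mul, zero_mul, mul_zero, sub_zero]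
      simp only [LL]
      rw [glue_eq hQr _ _ h0 (by rw [hQeq]; linarith)]
      simp only [PhiL]
      rw [cl_of_le hA, cl_of_le (by linarith : t ≤ (q₁:ℝ) + (q₂:ℝ) - 1)]
      simp [ei_zero, cc_zero, ss_zero]
    · have hu : cl ((q₁:ℝ) - 1) t = t - ((q₁:ℝ) - 1) := cl_of_mem (le_of_lt hA) (by linarith)
      rw [hu]
      set u : ℝ := t - ((q₁:ℝ) - 1) with hudef
      have hLt : LL q₁ q₂ a₁ a₂ F G (s, t)
          = ei u * cc u * F (s, t) + ss u * (ep a₂ s * G (s, t - (q₁:ℝ) + (q₂:ℝ))) := by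
        simp only [LL]
        rw [glue_eq hQr _ _ h0 (by rw [hQeq]; linarith)]
        simp only [PhiL]
        rw [hu, cl_of_le (by linarith : t ≤ (q₁:ℝ) + (q₂:ℝ) - 1)]
        have hGr : G (s, t - (q₁:ℝ)) = ep a₂ s * G (s, t - (q₁:ℝ) + (q₂:ℝ)) := by
          have h' := hG3 s (t - (q₁:ℝ) + (q₂:ℝ))
          rw [show t - (q₁:ℝ) + (q₂:ℝ) - ((q₂:ℤ):ℝ) = t - (q₁:ℝ) by push_cast; ring] at h'
          exact h'
        rw [hGr]
        simp only [ei_zero, cc_zero, ss_zero, mul_zero, zero_mul, mul_one, one_mul, sub_zero]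
      have hLt2 : LL q₁ q₂ a₁ a₂ F G (s, t + (q₂:ℝ))
          = cc u * G (s, t - (q₁:ℝ) + (q₂:ℝ)) - ei u * ss u * ep (-a₂) s * F (s, t) := by
        simp only [LL]
        rw [glue_eq hQr _ _ (by linarith) (by rw [hQeq]; linarith)]
        simp only [PhiL]
        rw [cl_of_ge (by linarith : (q₁:ℝ) - 1 + 1 ≤ t + (q₂:ℝ)),
          cl_of_mem (by linarith : (q₁:ℝ) + (q₂:ℝ) - 1 ≤ t + (q₂:ℝ))
            (by linarith : t + (q₂:ℝ) ≤ (q₁:ℝ) + (q₂:ℝ) - 1 + 1),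
          show t + (q₂:ℝ) - ((q₁:ℝ) + (q₂:ℝ) - 1) = u by rw [hudef]; ring,
          show t + (q₂:ℝ) - ((q₂:ℤ):ℝ) = t by push_cast; ring,
          show t + (q₂:ℝ) - ((q₁:ℤ):ℝ) = t - (q₁:ℝ) + (q₂:ℝ) by push_cast; ring]
        simp only [cc_one, ss_one, ei_one, mul_zero, zero_mul, mul_one, one_mul, zero_add]
      rw [hLt, hLt2]
      have h1' := ep_mul_neg a₂ s
      have h2' := ei_neg_mul u
      have h3' := ss_sq_add_cc_sq u
      linear_combination (ei (-u) * ei u * ss u ^ 2 * F (s, t)) * h1'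
        + (ei (-u) * ei u * F (s, t)) * h3' + F (s, t) * h2'

lemma PG_LL (q₁ q₂ a₁ a₂ : ℤ) (hq₁ : 0 < q₁) (hq₂ : 0 < q₂) {F G : ℝ × ℝ → ℂ}
    (hF : F ∈ Xset q₁ a₁) (hG : G ∈ Xset q₂ a₂) :
    PG q₁ q₂ a₁ a₂ (LL q₁ q₂ a₁ a₂ F G) = G := by
  obtain ⟨hFc, hF1, hF3⟩ := hF
  obtain ⟨hGc, hG1, hG3⟩ := hG
  have hr1 : (1:ℝ) ≤ (q₁:ℝ) := by exact_mod_cast hq₁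
  have hr2 : (1:ℝ) ≤ (q₂:ℝ) := by exact_mod_cast hq₂
  have hq2r : (0:ℝ) < ((q₂:ℤ):ℝ) := by linarith
  have hQr : (0:ℝ) < (((q₁ + q₂ : ℤ)):ℝ) := by push_cast; linarith
  have hQeq : (((q₁ + q₂ : ℤ)):ℝ) = (q₁:ℝ) + (q₂:ℝ) := by push_cast; ring
  apply eq_on_strip hq2r (a := a₂)
  · intro s t; exact glue_sub hq2r _ _ s t
  · exact hG3
  · intro s y h0 h1
    show glue _ a₂ (PhiG q₁ q₂ a₂ (LL q₁ q₂ a₁ a₂ F G)) (s, y) = G (s, y)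
    rw [glue_eq hq2r _ _ h0 h1]
    simp only [PhiG]
    rcases le_or_gt y ((q₂:ℝ) - 1) with hA | hA
    · rw [cl_of_le hA]
      simp only [ss_zero, cc_zero, zero_mul, mul_zero, one_mul, zero_add]
      simp only [LL]
      rw [glue_eq hQr _ _ (by linarith) (by rw [hQeq]; linarith)]
      simp only [PhiL]
      rw [cl_of_ge (by linarith : (q₁:ℝ) - 1 + 1 ≤ y + (q₁:ℝ)),
        cl_of_le (by linarith : y + (q₁:ℝ) ≤ (q₁:ℝ) + (q₂:ℝ) - 1),
        show y + ((q₁:ℤ):ℝ) - ((q₁:ℤ):ℝ) = y by ring]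
      simp [cc_one, ss_one, ei_one, cc_zero, ss_zero, ei_zero]
    · have hv : cl ((q₂:ℝ) - 1) y = y - ((q₂:ℝ) - 1) := cl_of_mem (le_of_lt hA) (by linarith)
      rw [hv]
      set v : ℝ := y - ((q₂:ℝ) - 1) with hvdef
      have hLx : LL q₁ q₂ a₁ a₂ F G (s, y + (q₁:ℝ) - (q₂:ℝ))
          = ei v * cc v * F (s, y + (q₁:ℝ) - (q₂:ℝ)) + ss v * (ep a₂ s * G (s, y)) := by
        simp only [LL]
        rw [glue_eq hQr _ _ (by linarith) (by rw [hQeq]; linarith)]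
        simp only [PhiL]
        rw [cl_of_mem (by linarith : (q₁:ℝ) - 1 ≤ y + (q₁:ℝ) - (q₂:ℝ))
            (by linarith : y + (q₁:ℝ) - (q₂:ℝ) ≤ (q₁:ℝ) - 1 + 1),
          show y + (q₁:ℝ) - (q₂:ℝ) - ((q₁:ℝ) - 1) = v by rw [hvdef]; ring,
          cl_of_le (by linarith : y + (q₁:ℝ) - (q₂:ℝ) ≤ (q₁:ℝ) + (q₂:ℝ) - 1),
          show y + (q₁:ℝ) - (q₂:ℝ) - ((q₁:ℤ):ℝ) = y - ((q₂:ℤ):ℝ) by push_cast; ring]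
        have hGr : G (s, y - ((q₂:ℤ):ℝ)) = ep a₂ s * G (s, y) := hG3 s y
        rw [hGr]
        simp only [ei_zero, cc_zero, ss_zero, mul_zero, zero_mul, mul_one, one_mul, sub_zero]
      have hLy : LL q₁ q₂ a₁ a₂ F G (s, y + (q₁:ℝ))
          = cc v * G (s, y) - ei v * ss v * ep (-a₂) s * F (s, y + (q₁:ℝ) - (q₂:ℝ)) := by
        simp only [LL]
        rw [glue_eq hQr _ _ (by linarith) (by rw [hQeq]; linarith)]
        simp only [PhiL]
        rw [cl_of_ge (by linarith : (q₁:ℝ) - 1 + 1 ≤ y + (q₁:ℝ)),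
          cl_of_mem (by linarith : (q₁:ℝ) + (q₂:ℝ) - 1 ≤ y + (q₁:ℝ))
            (by linarith : y + (q₁:ℝ) ≤ (q₁:ℝ) + (q₂:ℝ) - 1 + 1),
          show y + (q₁:ℝ) - ((q₁:ℝ) + (q₂:ℝ) - 1) = v by rw [hvdef]; ring,
          show y + ((q₁:ℤ):ℝ) - ((q₁:ℤ):ℝ) = y by ring,
          show y + ((q₁:ℤ):ℝ) - ((q₂:ℤ):ℝ) = y + (q₁:ℝ) - (q₂:ℝ) by push_cast; ring]
        simp only [cc_one, ss_one, ei_one, mul_zero, zero_mul, mul_one, one_mul, zero_add]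
      rw [hLx, hLy]
      have h1' := ep_mul_neg a₂ s
      have h3' := ss_sq_add_cc_sq v
      linear_combination (ss v ^ 2 * G (s, y)) * h1' + G (s, y) * h3'

lemma LL_PF_PG (q₁ q₂ a₁ a₂ : ℤ) (hq₁ : 0 < q₁) (hq₂ : 0 < q₂) {H : ℝ × ℝ → ℂ}
    (hH : H ∈ Xset (q₁ + q₂) (a₁ + a₂)) :
    LL q₁ q₂ a₁ a₂ (PF q₁ q₂ a₁ a₂ H) (PG q₁ q₂ a₁ a₂ H) = H := by
  obtain ⟨hHc, hH1, hH3⟩ := hH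
  have hr1 : (1:ℝ) ≤ (q₁:ℝ) := by exact_mod_cast hq₁
  have hr2 : (1:ℝ) ≤ (q₂:ℝ) := by exact_mod_cast hq₂
  have hq1r : (0:ℝ) < ((q₁:ℤ):ℝ) := by linarith
  have hq2r : (0:ℝ) < ((q₂:ℤ):ℝ) := by linarith
  have hQr : (0:ℝ) < (((q₁ + q₂ : ℤ)):ℝ) := by push_cast; linarith
  have hQeq : (((q₁ + q₂ : ℤ)):ℝ) = (q₁:ℝ) + (q₂:ℝ) := by push_cast; ring
  apply eq_on_strip hQr (a := a₁ + a₂)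
  · intro s t; exact glue_sub hQr _ _ s t
  · exact hH3
  · intro s t h0 h1
    rw [hQeq] at h1
    show glue _ (a₁ + a₂) (PhiL q₁ q₂ a₂ (PF q₁ q₂ a₁ a₂ H) (PG q₁ q₂ a₁ a₂ H)) (s, t) = H (s, t)
    rw [glue_eq hQr _ _ h0 (by rw [hQeq]; linarith)]
    simp only [PhiL]
    rcases le_or_gt t ((q₁:ℝ) - 1) with hA | hA
    · -- case (i)
      rw [cl_of_le hA, cl_of_le (by linarith : t ≤ (q₁:ℝ) + (q₂:ℝ) - 1)]
      simp only [ei_zero, cc_zero, ss_zero, one_mul, zero_mul, mul_zero, sub_zero, add_zero,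
        mul_one]
      show glue _ a₁ (PhiF q₁ q₂ a₂ H) (s, t) = H (s, t)
      rw [glue_eq hq1r _ _ h0 (by linarith)]
      simp only [PhiF]
      rw [cl_of_le hA]
      simp [ei_zero, cc_zero, ss_zero]
    · rcases lt_or_ge t ((q₁:ℝ)) with hB | hB
      · -- case (ii)
        have hu : cl ((q₁:ℝ) - 1) t = t - ((q₁:ℝ) - 1) := cl_of_mem (le_of_lt hA) (by linarith)
        rw [hu, cl_of_le (by linarith : t ≤ (q₁:ℝ) + (q₂:ℝ) - 1)]
        set u : ℝ := t - ((q₁:ℝ) - 1) with hudef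
        have hPF : PF q₁ q₂ a₁ a₂ H (s, t)
            = ei (-u) * (cc u * H (s, t) - ss u * ep a₂ s * H (s, t + (q₂:ℝ))) := by
          show glue _ a₁ (PhiF q₁ q₂ a₂ H) (s, t) = _
          rw [glue_eq hq1r _ _ h0 (by linarith)]
          simp only [PhiF]
          rw [hu]
        have hPG : PG q₁ q₂ a₁ a₂ H (s, t - (q₁:ℝ))
            = ep a₂ s * (ss u * ep (-a₂) s * H (s, t) + cc u * H (s, t + (q₂:ℝ))) := by
          show glue _ a₂ (PhiG q₁ q₂ a₂ H) (s, t - (q₁:ℝ)) = _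
          rw [glue_eq_neg_one hq2r _ _ (by linarith) (by linarith)]
          simp only [PhiG]
          rw [show t - (q₁:ℝ) + ((q₂:ℤ):ℝ) = t - (q₁:ℝ) + (q₂:ℝ) by push_cast; ring,
            cl_of_mem (by linarith : (q₂:ℝ) - 1 ≤ t - (q₁:ℝ) + (q₂:ℝ))
              (by linarith : t - (q₁:ℝ) + (q₂:ℝ) ≤ (q₂:ℝ) - 1 + 1),
            show t - (q₁:ℝ) + (q₂:ℝ) - ((q₂:ℝ) - 1) = u by rw [hudef]; ring,
            show t - (q₁:ℝ) + (q₂:ℝ) + ((q₁:ℤ):ℝ) - ((q₂:ℤ):ℝ) = t by push_cast; ring,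
            show t - (q₁:ℝ) + (q₂:ℝ) + ((q₁:ℤ):ℝ) = t + (q₂:ℝ) by push_cast; ring]
        rw [show t - ((q₁:ℤ):ℝ) = t - (q₁:ℝ) by push_cast; ring] at *
        simp only [cc_zero, ss_zero, ei_zero, mul_zero, zero_mul, mul_one, one_mul, sub_zero]
        rw [hPF, hPG]
        have h1' := ep_mul_neg a₂ s
        have h2' := ei_neg_mul u
        have h3' := ss_sq_add_cc_sq u
        linear_combination (cc u ^ 2 * H (s, t) - cc u * ss u * ep a₂ s * H (s, t + (q₂:ℝ))) * h2'
          + (ss u ^ 2 * H (s, t)) * h1' + H (s, t) * h3'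
      · rcases le_or_gt t ((q₁:ℝ) + (q₂:ℝ) - 1) with hC | hC
        · -- case (iii)
          rw [cl_of_ge (by linarith : (q₁:ℝ) - 1 + 1 ≤ t), cl_of_le hC]
          simp only [cc_one, ss_one, ei_one, cc_zero, ss_zero, ei_zero, mul_zero, zero_mul,
            mul_one, one_mul, sub_zero, neg_mul, neg_neg, zero_add]
          show glue _ a₂ (PhiG q₁ q₂ a₂ H) (s, t - ((q₁:ℤ):ℝ)) = H (s, t)
          rw [glue_eq hq2r _ _ (by push_cast; linarith) (by push_cast; linarith)]
          simp only [PhiG]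
          rw [cl_of_le (by push_cast; linarith : t - ((q₁:ℤ):ℝ) ≤ (q₂:ℝ) - 1),
            show t - ((q₁:ℤ):ℝ) + ((q₁:ℤ):ℝ) = t by ring]
          simp [ss_zero, cc_zero]
        · -- case (iv)
          have hw : cl ((q₁:ℝ) + (q₂:ℝ) - 1) t = t - ((q₁:ℝ) + (q₂:ℝ) - 1) :=
            cl_of_mem (le_of_lt hC) (by linarith)
          rw [cl_of_ge (by linarith : (q₁:ℝ) - 1 + 1 ≤ t), hw]
          set w : ℝ := t - ((q₁:ℝ) + (q₂:ℝ) - 1) with hwdef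
          have hPG : PG q₁ q₂ a₁ a₂ H (s, t - ((q₁:ℤ):ℝ))
              = ss w * ep (-a₂) s * H (s, t - (q₂:ℝ)) + cc w * H (s, t) := by
            show glue _ a₂ (PhiG q₁ q₂ a₂ H) (s, t - ((q₁:ℤ):ℝ)) = _
            rw [glue_eq hq2r _ _ (by push_cast; linarith) (by push_cast; linarith)]
            simp only [PhiG]
            rw [cl_of_mem (by push_cast; linarith : (q₂:ℝ) - 1 ≤ t - ((q₁:ℤ):ℝ))
                (by push_cast; linarith : t - ((q₁:ℤ):ℝ) ≤ (q₂:ℝ) - 1 + 1),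
              show t - ((q₁:ℤ):ℝ) - ((q₂:ℝ) - 1) = w by rw [hwdef]; push_cast; ring,
              show t - ((q₁:ℤ):ℝ) + ((q₁:ℤ):ℝ) - ((q₂:ℤ):ℝ) = t - (q₂:ℝ) by push_cast; ring,
              show t - ((q₁:ℤ):ℝ) + ((q₁:ℤ):ℝ) = t by ring]
          have hPF : PF q₁ q₂ a₁ a₂ H (s, t - ((q₂:ℤ):ℝ))
              = ei (-w) * (cc w * H (s, t - (q₂:ℝ)) - ss w * ep a₂ s * H (s, t)) := by
            show glue _ a₁ (PhiF q₁ q₂ a₂ H) (s, t - ((q₂:ℤ):ℝ)) = _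
            rw [glue_eq hq1r _ _ (by push_cast; linarith) (by push_cast; linarith)]
            simp only [PhiF]
            rw [cl_of_mem (by push_cast; linarith : (q₁:ℝ) - 1 ≤ t - ((q₂:ℤ):ℝ))
                (by push_cast; linarith : t - ((q₂:ℤ):ℝ) ≤ (q₁:ℝ) - 1 + 1),
              show t - ((q₂:ℤ):ℝ) - ((q₁:ℝ) - 1) = w by rw [hwdef]; push_cast; ring,
              show t - ((q₂:ℤ):ℝ) + ((q₂:ℤ):ℝ) = t by ring,
              show t - ((q₂:ℤ):ℝ) = t - (q₂:ℝ) by push_cast; ring]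
          simp only [cc_one, ss_one, ei_one, mul_zero, zero_mul, mul_one, one_mul, zero_add,
            neg_mul, neg_neg]
          rw [hPF, hPG]
          have h1' := ep_mul_neg a₂ s
          have h2' := ei_neg_mul w
          have h3' := ss_sq_add_cc_sq w
          linear_combination (-(ss w * cc w * ep (-a₂) s * H (s, t - (q₂:ℝ)))
              + ss w ^ 2 * ep (-a₂) s * ep a₂ s * H (s, t)) * h2'
            + (ss w ^ 2 * H (s, t)) * h1' + H (s, t) * h3'

/-- `X(q₁,a₁) ⊕ X(q₂,a₂) ≅ X(q₁+q₂, a₁+a₂)` as `C(𝕋²)`-modules: there is an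
additive, `C(𝕋²)`-linear bijection from the direct sum onto `X(q₁+q₂,a₁+a₂)`. -/
theorem stmt17 (q₁ q₂ a₁ a₂ : ℤ) (hq₁ : 0 < q₁) (hq₂ : 0 < q₂) :
    ∃ L : (ℝ × ℝ → ℂ) → (ℝ × ℝ → ℂ) → (ℝ × ℝ → ℂ),
      (∀ F ∈ Xset q₁ a₁, ∀ G ∈ Xset q₂ a₂, L F G ∈ Xset (q₁ + q₂) (a₁ + a₂)) ∧
      (∀ F ∈ Xset q₁ a₁, ∀ F' ∈ Xset q₁ a₁, ∀ G ∈ Xset q₂ a₂, ∀ G' ∈ Xset q₂ a₂,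
        L (F + F') (G + G') = L F G + L F' G') ∧
      (∀ F ∈ Xset q₁ a₁, ∀ G ∈ Xset q₂ a₂, ∀ f, PerC f →
        L (fun x => f x * F x) (fun x => f x * G x) = fun x => f x * L F G x) ∧
      (∀ F ∈ Xset q₁ a₁, ∀ F' ∈ Xset q₁ a₁, ∀ G ∈ Xset q₂ a₂, ∀ G' ∈ Xset q₂ a₂,
        L F G = L F' G' → F = F' ∧ G = G') ∧
      (∀ H ∈ Xset (q₁ + q₂) (a₁ + a₂),
        ∃ F ∈ Xset q₁ a₁, ∃ G ∈ Xset q₂ a₂, L F G = H) := by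
  refine ⟨LL q₁ q₂ a₁ a₂, ?_, ?_, ?_, ?_, ?_⟩
  · intro F hF G hG
    exact LL_mem q₁ q₂ a₁ a₂ hq₁ hq₂ hF hG
  · intro F _ F' _ G _ G' _
    exact LL_add q₁ q₂ a₁ a₂ F F' G G'
  · intro F _ G _ f hf
    exact LL_smul q₁ q₂ a₁ a₂ F G hf
  · intro F hF F' hF' G hG G' hG' h
    constructor
    · have e1 := PF_LL q₁ q₂ a₁ a₂ hq₁ hq₂ hF hG
      have e2 := PF_LL q₁ q₂ a₁ a₂ hq₁ hq₂ hF' hG'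
      rw [← e1, ← e2, h]
    · have e1 := PG_LL q₁ q₂ a₁ a₂ hq₁ hq₂ hF hG
      have e2 := PG_LL q₁ q₂ a₁ a₂ hq₁ hq₂ hF' hG'
      rw [← e1, ← e2, h]
  · intro H hH
    exact ⟨PF q₁ q₂ a₁ a₂ H, PF_mem q₁ q₂ a₁ a₂ hq₁ hq₂ hH,
      PG q₁ q₂ a₁ a₂ H, PG_mem q₁ q₂ a₁ a₂ hq₁ hq₂ hH,
      LL_PF_PG q₁ q₂ a₁ a₂ hq₁ hq₂ hH⟩
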